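/- The limit B := lim_{x→∞} (∑_{p ≤ x} 1/p − ln ln x) exists and is finite. -/

import Mathlib

open Finset Nat

noncomputable def mF (n : ℕ) : Finset ℕ := (Finset.range (n+1)).filter Nat.Prime
noncomputable def mL (n : ℕ) : ℝ := ∑ p ∈ mF n, Real.log p / p
noncomputable def mTheta (n : ℕ) : ℝ := ∑ p ∈ mF n, Real.log p

lemma mem_mF {p n : ℕ} : p ∈ mF n ↔ p ≤ n ∧ p.Prime := by
  simp [mF, Nat.lt_succ_iff, and_comm]

lemma theta_le (n : ℕ) : mTheta n ≤ n * Real.log 4 := by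
  have h1 : mTheta n = Real.log (∏ p ∈ mF n, (p : ℝ)) := by
    rw [Real.log_prod (fun p hp => by exact_mod_cast (mem_mF.1 hp).2.pos.ne')]
    rfl
  have h2 : (∏ p ∈ mF n, (p : ℝ)) = ((primorial n : ℕ) : ℝ) := by
    rw [primorial]; push_cast; rfl
  rw [h1, h2]
  have h3 : Real.log ((primorial n : ℕ) : ℝ) ≤ Real.log (((4:ℕ) ^ n : ℕ) : ℝ) := by
    apply Real.log_le_log (by exact_mod_cast primorial_pos n)
    exact_mod_cast primorial_le_4_pow n
  refine h3.trans_eq ?_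
  push_cast
  rw [Real.log_pow]

lemma log_factorial_eq (n : ℕ) :
    Real.log (n ! : ℕ) = ∑ p ∈ mF n, ((n !).factorization p : ℝ) * Real.log p := by
  have hn : (n ! : ℕ) ≠ 0 := Nat.factorial_ne_zero n
  have h0 : ((n ! : ℕ) : ℝ) = ∏ p ∈ (n !).primeFactors, ((p : ℝ) ^ (n !).factorization p) := by
    conv_lhs => rw [← Nat.factorization_prod_pow_eq_self hn]
    rw [Nat.prod_factorization_eq_prod_primeFactors]
    push_cast
    rfl
  rw [h0, Real.log_prod (fun p hp => by
      have := (Nat.prime_of_mem_primeFactors hp).pos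
      positivity)]
  rw [Finset.sum_subset (fun p hp => mem_mF.2
      ⟨(Nat.Prime.dvd_factorial (Nat.prime_of_mem_primeFactors hp)).1
        (Nat.dvd_of_mem_primeFactors hp), Nat.prime_of_mem_primeFactors hp⟩)
    (fun p _ hnp => by
      rw [← Nat.support_factorization, Finsupp.notMem_support_iff] at hnp
      simp [hnp])]
  exact Finset.sum_congr rfl (fun p _ => by rw [Real.log_pow])

-- Legendre lower bound: n / p ≤ (n !).factorization p
lemma fact_factorization_ge {p n : ℕ} (hp : p.Prime) (hpn : p ≤ n) :
    n / p ≤ (n !).factorization p := by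
  haveI : Fact p.Prime := ⟨hp⟩
  rw [Nat.factorization_def _ hp, padicValNat_factorial (Nat.lt_succ_self _)]
  have h1 : (1 : ℕ) ∈ Finset.Ico 1 (Nat.log p n + 1) := by
    simp [Nat.log_pos hp.one_lt hpn]
  calc n / p = n / p ^ 1 := by rw [pow_one]
    _ ≤ _ := Finset.single_le_sum (f := fun i => n / p ^ i) (fun i _ => Nat.zero_le _) h1

-- Legendre upper bound (real): factorization ≤ n/p + 2n/p²
lemma fact_factorization_le {p n : ℕ} (hp : p.Prime) :
    ((n !).factorization p : ℝ) ≤ n / p + 2 * n / p ^ 2 := by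
  haveI : Fact p.Prime := ⟨hp⟩
  have hp2 : (2 : ℝ) ≤ p := by exact_mod_cast hp.two_le
  have hp0 : (0 : ℝ) < p := by linarith
  have hr0 : (0 : ℝ) ≤ (p : ℝ)⁻¹ := by positivity
  have hr1 : (p : ℝ)⁻¹ < 1 := by
    rw [inv_lt_one_iff₀]; right; linarith
  rw [Nat.factorization_def _ hp, padicValNat_factorial (Nat.lt_succ_self _)]
  set b := Nat.log p n + 1
  have step1 : ((∑ i ∈ Finset.Ico 1 b, n / p ^ i : ℕ) : ℝ)
      ≤ ∑ i ∈ Finset.Ico 1 b, (n : ℝ) * ((p : ℝ)⁻¹) ^ i := by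
    push_cast
    apply Finset.sum_le_sum
    intro i _
    have := Nat.cast_div_le (α := ℝ) (m := n) (n := p ^ i)
    push_cast at this
    calc ((n / p ^ i : ℕ) : ℝ) ≤ (n : ℝ) / (p : ℝ) ^ i := this
      _ = (n : ℝ) * ((p : ℝ)⁻¹) ^ i := by rw [div_eq_mul_inv, inv_pow]
  have step2 : ∑ i ∈ Finset.Ico 1 b, (n : ℝ) * ((p : ℝ)⁻¹) ^ i
      ≤ (n : ℝ) * ((p : ℝ)⁻¹ * (1 - (p : ℝ)⁻¹)⁻¹) := by
    rw [Finset.sum_Ico_eq_sum_range]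
    have : ∀ i, (n : ℝ) * ((p : ℝ)⁻¹) ^ (1 + i) = ((n : ℝ) * (p : ℝ)⁻¹) * ((p : ℝ)⁻¹) ^ i := by
      intro i; rw [pow_add, pow_one]; ring
    simp_rw [this, ← Finset.mul_sum]
    rw [mul_assoc]
    apply mul_le_mul_of_nonneg_left _ (by positivity)
    apply mul_le_mul_of_nonneg_left _ hr0
    exact Summable.sum_le_tsum _ (fun i _ => by positivity)
      (summable_geometric_of_lt_one hr0 hr1) |>.trans_eq
      (tsum_geometric_of_lt_one hr0 hr1)
  refine (step1.trans step2).trans ?_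
  have hp1 : (0:ℝ) < (p:ℝ) - 1 := by linarith
  have key : (p : ℝ)⁻¹ * (1 - (p : ℝ)⁻¹)⁻¹ ≤ 1/(p:ℝ) + 2/(p:ℝ)^2 := by
    have heq : (p : ℝ)⁻¹ * (1 - (p : ℝ)⁻¹)⁻¹ = ((p:ℝ) - 1)⁻¹ := by
      rw [← mul_inv]
      congr 1
      field_simp
    rw [heq, inv_eq_one_div, div_add_div _ _ (by positivity) (by positivity),
      div_le_div_iff₀ hp1 (by positivity)]
    nlinarith
  calc (n : ℝ) * ((p : ℝ)⁻¹ * (1 - (p : ℝ)⁻¹)⁻¹) ≤ (n:ℝ) * (1/(p:ℝ) + 2/(p:ℝ)^2) :=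
        mul_le_mul_of_nonneg_left key (by positivity)
    _ = (n:ℝ)/p + 2*n/(p:ℝ)^2 := by ring

noncomputable def mK : ℝ := ∑' k : ℕ, 2 * ((k : ℝ) ^ (-(3/2) : ℝ))

lemma summable_mK : Summable (fun k : ℕ => 2 * ((k : ℝ) ^ (-(3/2) : ℝ))) :=
  (Real.summable_nat_rpow.mpr (by norm_num)).mul_left 2

lemma Q_le_K (n : ℕ) : ∑ p ∈ mF n, Real.log p / (p:ℝ) ^ 2 ≤ mK := by
  have hterm : ∀ p ∈ mF n, Real.log p / (p:ℝ) ^ 2 ≤ 2 * ((p : ℝ) ^ (-(3/2) : ℝ)) := by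
    intro p hp
    have hp2 : (2:ℝ) ≤ p := by exact_mod_cast (mem_mF.1 hp).2.two_le
    have hp0 : (0:ℝ) < p := by linarith
    have hlog : Real.log p ≤ 2 * (p:ℝ) ^ ((1:ℝ)/2) := by
      have := Real.log_le_rpow_div (le_of_lt hp0) (by norm_num : (0:ℝ) < 1/2)
      calc Real.log p ≤ (p:ℝ) ^ ((1:ℝ)/2) / (1/2) := this
        _ = 2 * (p:ℝ) ^ ((1:ℝ)/2) := by ring
    calc Real.log p / (p:ℝ) ^ 2 ≤ 2 * (p:ℝ) ^ ((1:ℝ)/2) / (p:ℝ) ^ 2 := by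
          apply div_le_div_of_nonneg_right hlog (by positivity) |>.trans_eq rfl
      _ = 2 * ((p : ℝ) ^ (-(3/2) : ℝ)) := by
          rw [mul_div_assoc]
          congr 1
          rw [← Real.rpow_natCast (p:ℝ) 2, ← Real.rpow_sub hp0] <;> norm_num
  calc ∑ p ∈ mF n, Real.log p / (p:ℝ) ^ 2 ≤ ∑ p ∈ mF n, 2 * ((p : ℝ) ^ (-(3/2) : ℝ)) :=
        Finset.sum_le_sum hterm
    _ ≤ mK := Summable.sum_le_tsum _ (fun k _ => by positivity) summable_mK

lemma log_factorial_le (n : ℕ) : Real.log (n ! : ℕ) ≤ n * Real.log n := by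
  induction n with
  | zero => simp
  | succ n ih =>
      have h1 : ((n+1)! : ℕ) = (n+1) * (n !) := rfl
      have hcast : (((n+1)! : ℕ) : ℝ) = ((n:ℝ)+1) * ((n ! : ℕ) : ℝ) := by
        rw [h1]; push_cast; ring
      rw [hcast, Real.log_mul (by positivity) (by exact_mod_cast Nat.factorial_ne_zero n)]
      have hlogmono : Real.log n ≤ Real.log (n+1) := by
        rcases Nat.eq_zero_or_pos n with h | h
        · simp [h]
        · exact Real.log_le_log (by exact_mod_cast h) (by push_cast; linarith)
      push_cast
      calc Real.log ((n:ℝ)+1) + Real.log (n !) ≤ Real.log ((n:ℝ)+1) + n * Real.log n := by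
            linarith
        _ ≤ Real.log ((n:ℝ)+1) + n * Real.log ((n:ℝ)+1) := by nlinarith [Nat.cast_nonneg (α := ℝ) n]
        _ = ((n:ℝ)+1) * Real.log ((n:ℝ)+1) := by ring

lemma log_factorial_ge (n : ℕ) : n * Real.log n - n ≤ Real.log (n ! : ℕ) := by
  induction n with
  | zero => simp
  | succ n ih =>
      have hcast : (((n+1)! : ℕ) : ℝ) = ((n:ℝ)+1) * ((n ! : ℕ) : ℝ) := by
        rw [Nat.factorial_succ]; push_cast; ring
      rw [hcast, Real.log_mul (by positivity) (by exact_mod_cast Nat.factorial_ne_zero n)]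
      have key : ((n:ℝ)) * Real.log ((n:ℝ)+1) - n ≤ (n:ℝ) * Real.log n - n + 1 := by
        rcases Nat.eq_zero_or_pos n with h | h
        · simp [h]
        · have hn0 : (0:ℝ) < n := by exact_mod_cast h
          have hlog : Real.log ((n:ℝ)+1) - Real.log n ≤ 1 / n := by
            rw [← Real.log_div (by positivity) (by positivity)]
            have := Real.log_le_sub_one_of_pos (show (0:ℝ) < ((n:ℝ)+1)/n by positivity)
            calc Real.log (((n:ℝ)+1)/n) ≤ ((n:ℝ)+1)/n - 1 := this
              _ = 1 / n := by field_simp; ring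
          have : (n:ℝ) * (Real.log ((n:ℝ)+1) - Real.log n) ≤ 1 := by
            calc (n:ℝ) * (Real.log ((n:ℝ)+1) - Real.log n) ≤ (n:ℝ) * (1/n) :=
                  mul_le_mul_of_nonneg_left hlog (by positivity)
              _ = 1 := by field_simp
          nlinarith
      push_cast
      nlinarith [key, ih]

lemma mK_nonneg : 0 ≤ mK := tsum_nonneg (fun k => by positivity)

lemma nat_div_real_bounds {n p : ℕ} (hp : 0 < p) :
    (n : ℝ) / p ≤ ((n / p : ℕ) : ℝ) + 1 := by
  have h := Nat.div_add_mod n p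
  have hmod : n % p < p := Nat.mod_lt n hp
  have hp0 : (0:ℝ) < p := by exact_mod_cast hp
  rw [div_le_iff₀ hp0]
  have hcast : ((p : ℝ)) * ((n / p : ℕ) : ℝ) + ((n % p : ℕ) : ℝ) = (n : ℝ) := by
    exact_mod_cast congrArg (Nat.cast : ℕ → ℝ) h
  have hmod' : ((n % p : ℕ) : ℝ) < p := by exact_mod_cast hmod
  nlinarith

lemma L_upper {n : ℕ} (hn : 1 ≤ n) : mL n ≤ Real.log n + Real.log 4 := by
  have hn0 : (0:ℝ) < n := by exact_mod_cast hn
  have key : (n:ℝ) * mL n ≤ (n:ℝ) * Real.log n + (n:ℝ) * Real.log 4 := by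
    have h1 : (n:ℝ) * mL n ≤ Real.log (n ! : ℕ) + mTheta n := by
      rw [mL, Finset.mul_sum, log_factorial_eq, mTheta, ← Finset.sum_add_distrib]
      apply Finset.sum_le_sum
      intro p hp
      obtain ⟨hpn, hpp⟩ := mem_mF.1 hp
      have hlogp : 0 ≤ Real.log p := Real.log_nonneg (by exact_mod_cast hpp.one_lt.le)
      have hdiv : (n : ℝ) / p ≤ ((n / p : ℕ) : ℝ) + 1 := nat_div_real_bounds hpp.pos
      have hfact : ((n / p : ℕ) : ℝ) ≤ ((n !).factorization p : ℝ) := by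
        exact_mod_cast fact_factorization_ge hpp hpn
      calc (n:ℝ) * (Real.log p / p) = ((n:ℝ) / p) * Real.log p := by ring
        _ ≤ (((n / p : ℕ) : ℝ) + 1) * Real.log p := mul_le_mul_of_nonneg_right hdiv hlogp
        _ ≤ (((n !).factorization p : ℝ) + 1) * Real.log p := by
            apply mul_le_mul_of_nonneg_right _ hlogp; linarith
        _ = ((n !).factorization p : ℝ) * Real.log p + Real.log p := by ring
    have h2 := log_factorial_le n
    have h3 := theta_le n
    linarith
  have := (mul_le_mul_iff_right₀ hn0).mp (by linarith : (n:ℝ) * mL n ≤ (n:ℝ) * (Real.log n + Real.log 4))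
  linarith [this]

lemma L_lower {n : ℕ} (hn : 1 ≤ n) : Real.log n - (1 + 2 * mK) ≤ mL n := by
  have hn0 : (0:ℝ) < n := by exact_mod_cast hn
  have key : (n:ℝ) * Real.log n - (n:ℝ) ≤ (n:ℝ) * mL n + 2 * (n:ℝ) * mK := by
    have h1 : Real.log (n ! : ℕ) ≤ (n:ℝ) * mL n + 2 * (n:ℝ) * (∑ p ∈ mF n, Real.log p / (p:ℝ)^2) := by
      rw [log_factorial_eq, mL, Finset.mul_sum, Finset.mul_sum, ← Finset.sum_add_distrib]
      apply Finset.sum_le_sum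
      intro p hp
      obtain ⟨hpn, hpp⟩ := mem_mF.1 hp
      have hp0 : (0:ℝ) < p := by exact_mod_cast hpp.pos
      have hlogp : 0 ≤ Real.log p := Real.log_nonneg (by exact_mod_cast hpp.one_lt.le)
      calc ((n !).factorization p : ℝ) * Real.log p
          ≤ ((n:ℝ)/p + 2*(n:ℝ)/(p:ℝ)^2) * Real.log p :=
            mul_le_mul_of_nonneg_right (fact_factorization_le hpp) hlogp
        _ = (n:ℝ) * (Real.log p / p) + 2 * (n:ℝ) * (Real.log p / (p:ℝ)^2) := by ring
    have h2 := log_factorial_ge n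
    have h3 := Q_le_K n
    nlinarith
  have : (n:ℝ) * (Real.log n - (1 + 2*mK)) ≤ (n:ℝ) * mL n := by nlinarith
  exact le_of_mul_le_mul_left (by linarith) hn0

lemma mertens_first {x : ℝ} (hx : 2 ≤ x) :
    |mL ⌊x⌋₊ - Real.log x| ≤ Real.log 4 + 1 + 2 * mK + Real.log 2 := by
  set n := ⌊x⌋₊ with hn
  have hn2 : 2 ≤ n := Nat.le_floor (by exact_mod_cast hx)
  have hn1 : 1 ≤ n := by omega
  have hn0 : (0:ℝ) < n := by exact_mod_cast hn1
  have hfl : (n:ℝ) ≤ x := Nat.floor_le (by linarith)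
  have hfu : x < n + 1 := Nat.lt_floor_add_one x
  have hlog1 : Real.log n ≤ Real.log x := Real.log_le_log hn0 hfl
  have hlog2 : Real.log x ≤ Real.log n + Real.log 2 := by
    have hx2n : x ≤ 2 * n := by
      have : (1:ℝ) ≤ n := by exact_mod_cast hn1
      linarith
    calc Real.log x ≤ Real.log (2 * n) := Real.log_le_log (by linarith) hx2n
      _ = Real.log 2 + Real.log n := Real.log_mul (by norm_num) (ne_of_gt hn0)
      _ = Real.log n + Real.log 2 := by ring
  have hu := L_upper hn1
  have hl := L_lower hn1
  have hlog4 : 0 ≤ Real.log 4 := Real.log_nonneg (by norm_num)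
  have hlog2' : 0 ≤ Real.log 2 := Real.log_nonneg (by norm_num)
  have hK := mK_nonneg
  rw [abs_le]
  constructor <;> nlinarith

open MeasureTheory intervalIntegral

noncomputable def mc (k : ℕ) : ℝ := if k.Prime then Real.log k / k else 0

lemma mc_nonneg (k : ℕ) : 0 ≤ mc k := by
  unfold mc
  split
  · next h => exact div_nonneg (Real.log_nonneg (by exact_mod_cast h.one_lt.le)) (Nat.cast_nonneg k)
  · exact le_rfl

lemma sum_mc (n : ℕ) : ∑ k ∈ Finset.Icc 0 n, mc k = mL n := by
  rw [mL, mF, Finset.sum_filter, ← Nat.Ico_zero_eq_range, ← Finset.Ico_add_one_right_eq_Icc]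
  rfl

lemma mL_nonneg (n : ℕ) : 0 ≤ mL n :=
  Finset.sum_nonneg fun p hp => div_nonneg
    (Real.log_nonneg (by exact_mod_cast (mem_mF.1 hp).2.one_lt.le)) (Nat.cast_nonneg p)

lemma mL_mono : Monotone mL := by
  intro a b hab
  apply Finset.sum_le_sum_of_subset_of_nonneg
  · intro p hp
    exact mem_mF.2 ⟨(mem_mF.1 hp).1.trans hab, (mem_mF.1 hp).2⟩
  · intro p hp _
    exact div_nonneg (Real.log_nonneg (by exact_mod_cast (mem_mF.1 hp).2.one_lt.le))
      (Nat.cast_nonneg p)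

lemma mL_one : mL 1 = 0 := by
  have : mF 1 = ∅ := by decide
  rw [mL, this, Finset.sum_empty]

noncomputable def mAf (t : ℝ) : ℝ := mL ⌊t⌋₊
noncomputable def mg (t : ℝ) : ℝ := (mAf t - Real.log t) / (t * Real.log t ^ 2)

lemma measurable_mAf : Measurable mAf :=
  measurable_from_nat.comp Nat.measurable_floor

lemma measurable_mg : Measurable mg :=
  ((measurable_mAf.sub Real.measurable_log).div
    (measurable_id.mul (Real.measurable_log.pow_const 2)))

lemma tlog2_lower {t : ℝ} (ht : 3/2 ≤ t) :
    (3/2) * Real.log (3/2) ^ 2 ≤ t * Real.log t ^ 2 := by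
  have h1 : (0:ℝ) < Real.log (3/2) := Real.log_pos (by norm_num)
  have h2 : Real.log (3/2) ≤ Real.log t := Real.log_le_log (by norm_num) ht
  nlinarith

lemma tlog2_pos {t : ℝ} (ht : 3/2 ≤ t) : 0 < t * Real.log t ^ 2 :=
  lt_of_lt_of_le (by positivity : (0:ℝ) < (3/2) * Real.log (3/2) ^ 2) (tlog2_lower ht)

lemma integrableOn_mAf_div {a b : ℝ} (ha : 3/2 ≤ a) :
    IntegrableOn (fun t => mAf t / (t * Real.log t ^ 2)) (Set.Icc a b) := by
  have hmeas : AEStronglyMeasurable (fun t => mAf t / (t * Real.log t ^ 2))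
      volume :=
    (measurable_mAf.div (measurable_id.mul
      (Real.measurable_log.pow_const 2))).aestronglyMeasurable
  refine Measure.integrableOn_of_bounded (M := mL ⌊b⌋₊ * ((3/2) * Real.log (3/2) ^ 2)⁻¹)
    (by exact ne_of_lt measure_Icc_lt_top) hmeas ?_
  rw [ae_restrict_iff' measurableSet_Icc]
  filter_upwards with t ht
  have ht1 : 3/2 ≤ t := le_trans ha ht.1
  have hpos := tlog2_pos ht1
  have hA0 : 0 ≤ mAf t := mL_nonneg _
  have hAb : mAf t ≤ mL ⌊b⌋₊ := mL_mono (Nat.floor_le_floor ht.2)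
  rw [Real.norm_eq_abs, abs_div, abs_of_nonneg hA0, abs_of_pos hpos]
  have h1 : mAf t / (t * Real.log t ^ 2) ≤ mL ⌊b⌋₊ / ((3/2) * Real.log (3/2) ^ 2) :=
    div_le_div₀ (mL_nonneg _) hAb (by positivity) (tlog2_lower ht1)
  rw [div_eq_mul_inv] at h1
  exact h1

lemma hasDerivAt_loginv {t : ℝ} (ht : 3/2 ≤ t) :
    HasDerivAt (fun u => (Real.log u)⁻¹) (-(t * Real.log t ^ 2)⁻¹) t := by
  have ht0 : t ≠ 0 := by linarith [ht]
  have hlog : Real.log t ≠ 0 := ne_of_gt (Real.log_pos (by linarith))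
  have h := (Real.hasDerivAt_log ht0).inv hlog
  rw [show -(t * Real.log t ^ 2)⁻¹ = -t⁻¹ / Real.log t ^ 2 by ring]
  exact h

lemma hasDerivAt_loglog {t : ℝ} (ht : 3/2 ≤ t) :
    HasDerivAt (fun u => Real.log (Real.log u)) ((Real.log t)⁻¹ * t⁻¹) t := by
  have ht0 : t ≠ 0 := by linarith [ht]
  have hlog : Real.log t ≠ 0 := ne_of_gt (Real.log_pos (by linarith))
  exact (Real.hasDerivAt_log hlog).comp t (Real.hasDerivAt_log ht0)

lemma hasDerivAt_negloginv {t : ℝ} (ht : 3/2 ≤ t) :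
    HasDerivAt (fun u => -(Real.log u)⁻¹) ((t * Real.log t ^ 2)⁻¹) t := by
  have := (hasDerivAt_loginv ht).neg
  rw [neg_neg] at this; exact this

lemma integrableOn_invtlog2_Ioi : IntegrableOn (fun t => (t * Real.log t ^ 2)⁻¹) (Set.Ioi 2) := by
  apply integrableOn_Ioi_deriv_of_nonneg' (g := fun u => -(Real.log u)⁻¹) (l := 0)
  · intro t ht
    exact hasDerivAt_negloginv (by simp at ht; linarith)
  · intro t ht
    simp only [Set.mem_Ioi] at ht
    exact le_of_lt (inv_pos.mpr (tlog2_pos (by linarith)))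
  · have : Filter.Tendsto (fun u : ℝ => (Real.log u)⁻¹) Filter.atTop (nhds 0) :=
      Real.tendsto_log_atTop.inv_tendsto_atTop
    simpa using this.neg

noncomputable def mC : ℝ := Real.log 4 + 1 + 2 * mK + Real.log 2

lemma mC_nonneg : 0 ≤ mC := by
  have := mK_nonneg
  have h4 : 0 ≤ Real.log 4 := Real.log_nonneg (by norm_num)
  have h2 : 0 ≤ Real.log 2 := Real.log_nonneg (by norm_num)
  unfold mC; linarith

lemma mR_bound {t : ℝ} (ht : 2 ≤ t) : |mAf t - Real.log t| ≤ mC := mertens_first ht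

lemma integrableOn_mg_Ioi : IntegrableOn mg (Set.Ioi 2) := by
  have hbound : IntegrableOn (fun t => mC * (t * Real.log t ^ 2)⁻¹) (Set.Ioi 2) :=
    integrableOn_invtlog2_Ioi.smul mC
  apply Integrable.mono' hbound measurable_mg.aestronglyMeasurable.restrict
  rw [ae_restrict_iff' measurableSet_Ioi]
  filter_upwards with t ht
  simp only [Set.mem_Ioi] at ht
  have ht2 : 2 ≤ t := le_of_lt ht
  have hpos := tlog2_pos (by linarith : 3/2 ≤ t)
  rw [Real.norm_eq_abs, mg, abs_div, abs_of_pos hpos, div_le_iff₀ hpos]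
  calc |mAf t - Real.log t| ≤ mC := mR_bound ht2
    _ = mC * (t * Real.log t ^ 2)⁻¹ * (t * Real.log t ^ 2) := by
        rw [inv_mul_cancel_right₀ hpos.ne']

lemma floor_three_halves : ⌊(3/2 : ℝ)⌋₊ = 1 := by
  rw [Nat.floor_eq_iff (by norm_num)]
  norm_num

lemma abel_identity {x : ℝ} (hx : 2 ≤ x) :
    ∑ p ∈ (Finset.range (⌊x⌋₊ + 1)).filter Nat.Prime, (1:ℝ)/p
      = mAf x * (Real.log x)⁻¹ + ∫ t in (3/2 : ℝ)..x, mAf t / (t * Real.log t ^ 2) := by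
  have hab : (3/2 : ℝ) ≤ x := by linarith
  have hdiff : ∀ t ∈ Set.Icc (3/2 : ℝ) x, DifferentiableAt ℝ (fun u => (Real.log u)⁻¹) t :=
    fun t ht => (hasDerivAt_loginv ht.1).differentiableAt
  have hEq : Set.EqOn (fun t => -(t * Real.log t ^ 2)⁻¹)
      (deriv fun u => (Real.log u)⁻¹) (Set.Icc (3/2 : ℝ) x) :=
    fun t ht => ((hasDerivAt_loginv ht.1).deriv).symm
  have hcont : ContinuousOn (fun t : ℝ => -(t * Real.log t ^ 2)⁻¹) (Set.Icc (3/2 : ℝ) x) := by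
    apply ContinuousOn.neg
    apply ContinuousOn.inv₀
    · exact continuousOn_id.mul ((Real.continuousOn_log.mono (fun t ht => by
        simp only [Set.mem_compl_iff, Set.mem_singleton_iff]
        have := ht.1; intro h; rw [h] at this; norm_num at this)).pow 2)
    · exact fun t ht => ne_of_gt (tlog2_pos ht.1)
  have hint : IntegrableOn (deriv fun u => (Real.log u)⁻¹) (Set.Icc (3/2 : ℝ) x) :=
    (hcont.integrableOn_Icc).congr_fun hEq measurableSet_Icc
  have habel := sum_mul_eq_sub_sub_integral_mul mc (by norm_num : (0:ℝ) ≤ 3/2) hab hdiff hint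
  rw [floor_three_halves] at habel
  have hA32 : ∑ k ∈ Finset.Icc 0 1, mc k = 0 := by rw [sum_mc, mL_one]
  rw [hA32, mul_zero, sub_zero] at habel
  -- LHS equals the prime sum
  have hlhs : ∑ k ∈ Finset.Ioc 1 ⌊x⌋₊, (fun u : ℝ => (Real.log u)⁻¹) k * mc k
      = ∑ p ∈ (Finset.range (⌊x⌋₊ + 1)).filter Nat.Prime, (1:ℝ)/p := by
    rw [Finset.sum_filter]
    rw [← Finset.sum_subset (s₁ := Finset.Ioc 1 ⌊x⌋₊) (s₂ := Finset.range (⌊x⌋₊ + 1))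
      (fun k hk => by
        simp only [Finset.mem_Ioc] at hk
        simp [Finset.mem_range, Nat.lt_succ_iff, hk.2])
      (fun k hk hnk => by
        simp only [Finset.mem_Ioc, not_and_or, not_lt, not_le] at hnk
        rcases hnk with h1 | h2
        · interval_cases k <;> norm_num
        · simp only [Finset.mem_range, Nat.lt_succ_iff] at hk
          omega)]
    apply Finset.sum_congr rfl
    intro k hk
    simp only [Finset.mem_Ioc] at hk
    by_cases hp : k.Prime
    · simp only [mc, hp, if_true]
      have hk2 : (2:ℝ) ≤ k := by exact_mod_cast hp.two_le
      have hlog : Real.log k ≠ 0 := ne_of_gt (Real.log_pos (by linarith))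
      field_simp
    · simp [mc, hp]
  rw [hlhs] at habel
  -- integral term
  have hintg : ∫ t in Set.Ioc (3/2 : ℝ) x, (deriv fun u => (Real.log u)⁻¹) t
        * (∑ k ∈ Finset.Icc 0 ⌊t⌋₊, mc k)
      = - ∫ t in (3/2 : ℝ)..x, mAf t / (t * Real.log t ^ 2) := by
    rw [intervalIntegral.integral_of_le hab, ← MeasureTheory.integral_neg]
    apply MeasureTheory.setIntegral_congr_fun measurableSet_Ioc
    intro t ht
    have ht1 : (3/2 : ℝ) ≤ t := le_of_lt ht.1
    show deriv (fun u => (Real.log u)⁻¹) t * (∑ k ∈ Finset.Icc 0 ⌊t⌋₊, mc k)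
      = -(mAf t / (t * Real.log t ^ 2))
    rw [(hasDerivAt_loginv ht1).deriv, sum_mc]
    unfold mAf
    field_simp
  rw [hintg, sum_mc] at habel
  rw [habel]
  unfold mAf
  ring

lemma contOn_loginv_mul {s : Set ℝ} (hs : ∀ t ∈ s, 2 ≤ t) :
    ContinuousOn (fun t => (Real.log t)⁻¹ * t⁻¹) s := by
  apply ContinuousOn.mul
  · apply ContinuousOn.inv₀
    · refine Real.continuousOn_log.mono (fun t ht => ?_)
      simp only [Set.mem_compl_iff, Set.mem_singleton_iff]
      exact ne_of_gt (by linarith [hs t ht])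
    · exact fun t ht => ne_of_gt (Real.log_pos (by linarith [hs t ht]))
  · exact continuousOn_id.inv₀ (fun t ht => ne_of_gt (show (0:ℝ) < id t by
      simp only [id]; linarith [hs t ht]))

lemma intervalIntegrable_mAf_div {a b : ℝ} (ha : 3/2 ≤ a) (hab : a ≤ b) :
    IntervalIntegrable (fun t => mAf t / (t * Real.log t ^ 2)) volume a b := by
  apply MeasureTheory.IntegrableOn.intervalIntegrable
  rw [Set.uIcc_of_le hab]
  exact integrableOn_mAf_div ha

lemma integral_mAf_32_2 :
    ∫ t in (3/2 : ℝ)..2, mAf t / (t * Real.log t ^ 2) = 0 := by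
  rw [intervalIntegral.integral_of_le (by norm_num : (3/2:ℝ) ≤ 2),
    MeasureTheory.setIntegral_congr_set Ioo_ae_eq_Ioc.symm]
  rw [MeasureTheory.setIntegral_congr_fun measurableSet_Ioo
    (g := fun _ => (0:ℝ)) (fun t ht => by
      have h1 : (3/2:ℝ) < t := ht.1
      have h2 : t < 2 := ht.2
      have hfl : ⌊t⌋₊ = 1 := by
        rw [Nat.floor_eq_iff (by linarith : (0:ℝ) ≤ t)]
        norm_num
        constructor <;> linarith
      unfold mAf
      rw [hfl, mL_one, zero_div])]
  simp

lemma integral_loglog {x : ℝ} (hx : 2 ≤ x) :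
    ∫ t in (2:ℝ)..x, (Real.log t)⁻¹ * t⁻¹
      = Real.log (Real.log x) - Real.log (Real.log 2) := by
  apply intervalIntegral.integral_eq_sub_of_hasDerivAt
  · intro t ht
    rw [Set.uIcc_of_le hx] at ht
    exact hasDerivAt_loglog (by linarith [ht.1])
  · apply ContinuousOn.intervalIntegrable
    rw [Set.uIcc_of_le hx]
    exact contOn_loginv_mul (fun t ht => ht.1)

lemma intervalIntegrable_loginv {x : ℝ} (hx : 2 ≤ x) :
    IntervalIntegrable (fun t => (Real.log t)⁻¹ * t⁻¹) volume 2 x := by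
  apply ContinuousOn.intervalIntegrable
  rw [Set.uIcc_of_le hx]
  exact contOn_loginv_mul (fun t ht => ht.1)

lemma intervalIntegrable_mg {x : ℝ} (hx : 2 ≤ x) :
    IntervalIntegrable mg volume 2 x := by
  rw [intervalIntegrable_iff_integrableOn_Ioc_of_le hx]
  exact integrableOn_mg_Ioi.mono_set Set.Ioc_subset_Ioi_self

lemma integral_decomp {x : ℝ} (hx : 2 ≤ x) :
    ∫ t in (3/2 : ℝ)..x, mAf t / (t * Real.log t ^ 2)
      = (Real.log (Real.log x) - Real.log (Real.log 2)) + ∫ t in (2:ℝ)..x, mg t := by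
  have hsplit : ∫ t in (3/2 : ℝ)..x, mAf t / (t * Real.log t ^ 2)
      = (∫ t in (3/2 : ℝ)..2, mAf t / (t * Real.log t ^ 2))
        + ∫ t in (2:ℝ)..x, mAf t / (t * Real.log t ^ 2) := by
    rw [intervalIntegral.integral_add_adjacent_intervals
      (intervalIntegrable_mAf_div le_rfl (by norm_num))
      (intervalIntegrable_mAf_div (by norm_num) hx)]
  rw [hsplit, integral_mAf_32_2, zero_add]
  have hptwise : ∀ t ∈ Set.uIcc (2:ℝ) x,
      mAf t / (t * Real.log t ^ 2) = (Real.log t)⁻¹ * t⁻¹ + mg t := by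
    intro t ht
    rw [Set.uIcc_of_le hx] at ht
    have ht2 : (2:ℝ) ≤ t := ht.1
    have ht0 : t ≠ 0 := by linarith
    have hlog : Real.log t ≠ 0 := ne_of_gt (Real.log_pos (by linarith))
    unfold mg
    field_simp
    ring
  rw [intervalIntegral.integral_congr hptwise,
    intervalIntegral.integral_add (intervalIntegrable_loginv hx) (intervalIntegrable_mg hx),
    integral_loglog hx]

theorem mertens_constant_exists :
    ∃ B : ℝ, Filter.Tendsto
      (fun x : ℝ => ∑ p ∈ (Finset.range (⌊x⌋₊ + 1)).filter Nat.Prime, (1 : ℝ) / p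
        - Real.log (Real.log x))
      Filter.atTop (nhds B) := by
  refine ⟨1 - Real.log (Real.log 2) + ∫ t in Set.Ioi (2:ℝ), mg t, ?_⟩
  have h1 : Filter.Tendsto (fun x : ℝ => (mAf x - Real.log x) * (Real.log x)⁻¹)
      Filter.atTop (nhds 0) := by
    have hup : Filter.Tendsto (fun x : ℝ => mC * (Real.log x)⁻¹) Filter.atTop (nhds 0) := by
      have := (Real.tendsto_log_atTop.inv_tendsto_atTop).const_mul mC
      simpa using this
    have hlo : Filter.Tendsto (fun x : ℝ => -(mC * (Real.log x)⁻¹)) Filter.atTop (nhds 0) := by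
      simpa using hup.neg
    apply tendsto_of_tendsto_of_tendsto_of_le_of_le' hlo hup
    · filter_upwards [Filter.eventually_ge_atTop (2:ℝ)] with x hx
      have hlogpos : 0 < Real.log x := Real.log_pos (by linarith)
      have hb := mR_bound hx
      rw [abs_le] at hb
      have hinv : 0 ≤ (Real.log x)⁻¹ := le_of_lt (inv_pos.mpr hlogpos)
      nlinarith [hb.1, hb.2]
    · filter_upwards [Filter.eventually_ge_atTop (2:ℝ)] with x hx
      have hlogpos : 0 < Real.log x := Real.log_pos (by linarith)
      have hb := mR_bound hx
      rw [abs_le] at hb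
      have hinv : 0 ≤ (Real.log x)⁻¹ := le_of_lt (inv_pos.mpr hlogpos)
      nlinarith [hb.1, hb.2]
  have h2 : Filter.Tendsto (fun x : ℝ => ∫ t in (2:ℝ)..x, mg t) Filter.atTop
      (nhds (∫ t in Set.Ioi (2:ℝ), mg t)) :=
    MeasureTheory.intervalIntegral_tendsto_integral_Ioi 2 integrableOn_mg_Ioi Filter.tendsto_id
  have htot := (h1.add ((tendsto_const_nhds
      (x := 1 - Real.log (Real.log 2)) (f := Filter.atTop (α := ℝ))).add h2))
  rw [zero_add] at htot
  apply htot.congr'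
  filter_upwards [Filter.eventually_ge_atTop (2:ℝ)] with x hx
  have hlogpos : 0 < Real.log x := Real.log_pos (by linarith)
  rw [abel_identity hx, integral_decomp hx]
  have : mAf x * (Real.log x)⁻¹ = (mAf x - Real.log x) * (Real.log x)⁻¹ + 1 := by
    field_simp; ring
  rw [this]
  ring
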